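/- Let CZ = ⟨c, G, A, b⟩ be a constrained zonotope in ℝⁿ and H = {x : hᵀx ≤ ζ} a halfspace. Define d_m = ζ − hᵀc + Σᵢ |hᵀgᵢ| (sum over columns gᵢ of G), and assume d_m ≥ 0. Then the intersection CZ ∩ H equals the constrained zonotope ⟨c, [G 0], Ã, b̃⟩ with one extra generator, where Ã = [[A, 0], [hᵀG, d_m/2]] and b̃ = [b; ζ − hᵀc − d_m/2]. -/
import Mathlib

open Matrix

theorem conZono_halfspace_inter {n ng m : ℕ} (c : Fin n → ℝ)
    (G : Matrix (Fin n) (Fin ng) ℝ) (A : Matrix (Fin m) (Fin ng) ℝ) (b : Fin m → ℝ)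
    (h : Fin n → ℝ) (ζ : ℝ) (dm : ℝ)
    (hdm : dm = ζ - h ⬝ᵥ c + ∑ i, |Matrix.vecMul h G i|)
    (hpos : 0 ≤ dm)
    (CZ : Set (Fin n → ℝ))
    (hCZ : CZ = {x | ∃ α : Fin ng → ℝ, (∀ i, |α i| ≤ 1) ∧ A.mulVec α = b ∧
      x = c + G.mulVec α}) :
    CZ ∩ {x | h ⬝ᵥ x ≤ ζ} =
      {x | ∃ (α : Fin ng → ℝ) (β : ℝ), (∀ i, |α i| ≤ 1) ∧ |β| ≤ 1 ∧
        A.mulVec α = b ∧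
        h ⬝ᵥ G.mulVec α + (dm / 2) * β = ζ - h ⬝ᵥ c - dm / 2 ∧
        x = c + G.mulVec α} := by
  subst hCZ
  ext x
  simp only [Set.mem_inter_iff, Set.mem_setOf_eq]
  constructor
  · rintro ⟨⟨α, hα, hAb, rfl⟩, hx⟩
    have hs : h ⬝ᵥ G.mulVec α = Matrix.vecMul h G ⬝ᵥ α := Matrix.dotProduct_mulVec h G α
    set s := h ⬝ᵥ G.mulVec α with hsdef
    -- bound: s ≥ -∑ |...|
    have hlb : -(∑ i, |Matrix.vecMul h G i|) ≤ s := by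
      rw [hs, dotProduct]
      rw [← Finset.sum_neg_distrib]
      apply Finset.sum_le_sum
      intro i _
      have h1 : |Matrix.vecMul h G i * α i| ≤ |Matrix.vecMul h G i| := by
        rw [abs_mul]
        calc |Matrix.vecMul h G i| * |α i| ≤ |Matrix.vecMul h G i| * 1 := by
              exact mul_le_mul_of_nonneg_left (hα i) (abs_nonneg _)
          _ = |Matrix.vecMul h G i| := mul_one _
      nlinarith [neg_abs_le (Matrix.vecMul h G i * α i)]
    have hub : h ⬝ᵥ c + s ≤ ζ := by
      have : h ⬝ᵥ (c + G.mulVec α) = h ⬝ᵥ c + s := by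
        rw [dotProduct_add]
      linarith [hx, this ▸ hx]
    rcases eq_or_lt_of_le hpos with hdm0 | hdm0
    · -- dm = 0
      refine ⟨α, 0, hα, by norm_num, hAb, ?_, rfl⟩
      have : s = ζ - h ⬝ᵥ c := by linarith [hdm ▸ hdm0.symm, hlb, hub]
      rw [← hdm0]
      simp [this, ← hsdef]
    · refine ⟨α, 2 * (ζ - h ⬝ᵥ c - s) / dm - 1, hα, ?_, hAb, ?_, rfl⟩
      · rw [abs_le]
        constructor
        · have : ζ - h ⬝ᵥ c - s ≥ 0 := by linarith
          have h2 : 2 * (ζ - h ⬝ᵥ c - s) / dm ≥ 0 := by positivity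
          linarith
        · have : ζ - h ⬝ᵥ c - s ≤ dm := by linarith [hdm]
          have h2 : 2 * (ζ - h ⬝ᵥ c - s) / dm ≤ 2 := by
            rw [div_le_iff₀ hdm0]; linarith
          linarith
      · field_simp
        ring
  · rintro ⟨α, β, hα, hβ, hAb, heq, rfl⟩
    refine ⟨⟨α, hα, hAb, rfl⟩, ?_⟩
    rw [dotProduct_add]
    have hβ1 : -1 ≤ β := (abs_le.mp hβ).1
    have : (dm / 2) * β ≥ -(dm/2) := by nlinarith
    linarith
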